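/- The function v(x) := c₁ ū(x) + c₂ x is differentiable on ℝ^d and its Jacobian is sandwiched in the Loewner order: for all x, w ∈ ℝ^d, c₂ ‖w‖₂² ≤ ⟨w, Dv(x) w⟩ ≤ ( c₂ + d·α·β·(α b − a β)/s⁴ ) ‖w‖₂². -/

import Mathlib

open MeasureTheory Real
open scoped RealInnerProductSpace
noncomputable section
set_option synthInstance.maxHeartbeats 1000000
set_option maxHeartbeats 4000000

variable {E : Type*} [NormedAddCommGroup E] [InnerProductSpace ℝ E]

lemma aux_key (s2 : ℝ) (hs2 : 0 < s2) (r : ℝ) (hr : 0 ≤ r) :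
    r * Real.exp (-r ^ 2 / (2 * s2)) ≤ Real.sqrt (2 * s2) := by
  set K := Real.sqrt (2 * s2) with hK
  have hK2 : K ^ 2 = 2 * s2 := Real.sq_sqrt (by linarith)
  have hKpos : 0 < K := Real.sqrt_pos.2 (by linarith)
  rcases le_or_gt r K with h | h
  · have h1 : Real.exp (-r ^ 2 / (2 * s2)) ≤ 1 := by
      rw [Real.exp_le_one_iff, neg_div]
      have : 0 ≤ r ^ 2 / (2 * s2) := by positivity
      linarith
    nlinarith
  · have h2 : r ^ 2 / (2 * s2) ≤ Real.exp (r ^ 2 / (2 * s2)) :=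
      (Real.add_one_le_exp _).trans' (by linarith [Real.exp_pos (r ^ 2 / (2 * s2))]) |>.trans_eq rfl
    have hrpos : 0 < r := lt_of_le_of_lt hKpos.le h
    have h3 : Real.exp (-r ^ 2 / (2 * s2)) ≤ 2 * s2 / r ^ 2 := by
      rw [neg_div, Real.exp_neg]
      rw [inv_le_comm₀ (Real.exp_pos _) (by positivity)]
      calc (2 * s2 / r ^ 2)⁻¹ = r ^ 2 / (2 * s2) := by
            field_simp
        _ ≤ rexp (r ^ 2 / (2 * s2)) := h2

    calc r * Real.exp (-r ^ 2 / (2 * s2)) ≤ r * (2 * s2 / r ^ 2) := by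
          exact mul_le_mul_of_nonneg_left h3 hr
      _ = 2 * s2 / r := by field_simp
      _ ≤ 2 * s2 / K := by
          apply div_le_div_of_nonneg_left (by linarith) hKpos h.le
      _ = K := by
          field_simp
          nlinarith

lemma aux_hasFDerivAt_w (s2 : ℝ) (hs2 : 0 < s2) (c : E) (x : E) :
    HasFDerivAt (fun x : E => Real.exp (-‖x - c‖ ^ 2 / (2 * s2)))
      ((-s2⁻¹ * Real.exp (-‖x - c‖ ^ 2 / (2 * s2))) • innerSL ℝ (x - c)) x := by
  have h1 : HasFDerivAt (fun y : E => ‖y - c‖ ^ 2) (2 • innerSL ℝ (x - c)) x := by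
    simpa using ((hasFDerivAt_id x).sub_const c).norm_sq
  have h2 : HasFDerivAt (fun y : E => -‖y - c‖ ^ 2 / (2 * s2))
      ((-(2 * s2)⁻¹) • (2 • innerSL ℝ (x - c))) x := by
    have h3 := h1.const_mul (-(2 * s2)⁻¹)
    have : (fun y : E => -(2 * s2)⁻¹ * ‖y - c‖ ^ 2) = fun y : E => -‖y - c‖ ^ 2 / (2 * s2) := by
      funext y; ring
    rwa [this] at h3
  have h4 := (Real.hasDerivAt_exp (-‖x - c‖ ^ 2 / (2 * s2))).comp_hasFDerivAt x h2
  refine h4.congr_fderiv ?_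
  ext y
  simp only [ContinuousLinearMap.coe_smul', Pi.smul_apply, innerSL_apply_apply, smul_eq_mul,
    ContinuousLinearMap.smul_apply, nsmul_eq_mul, Nat.cast_ofNat]
  ring

lemma aux_norm_dw (s2 : ℝ) (hs2 : 0 < s2) (c : E) (x : E) :
    ‖(-s2⁻¹ * Real.exp (-‖x - c‖ ^ 2 / (2 * s2))) • innerSL ℝ (x - c)‖
      ≤ s2⁻¹ * Real.sqrt (2 * s2) := by
  rw [norm_smul (-s2⁻¹ * Real.exp (-‖x - c‖ ^ 2 / (2 * s2))) (innerSL ℝ (x - c)),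
    innerSL_apply_norm]
  have h := aux_key s2 hs2 ‖x - c‖ (norm_nonneg _)
  have h0 : ‖(-s2⁻¹ * Real.exp (-‖x - c‖ ^ 2 / (2 * s2)))‖
      = s2⁻¹ * Real.exp (-‖x - c‖ ^ 2 / (2 * s2)) := by
    rw [Real.norm_eq_abs, abs_mul, abs_neg, abs_inv, abs_of_pos hs2,
      abs_of_pos (Real.exp_pos _)]
  rw [h0, mul_assoc, mul_comm (Real.exp _)]
  exact mul_le_mul_of_nonneg_left h (by positivity)

variable {E : Type*} [NormedAddCommGroup E] [InnerProductSpace ℝ E]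

theorem velocity_jacobian_loewner_sandwich
    {d : ℕ} (hd : 1 ≤ d) (σ : ℝ) (hσ : 0 < σ)
    (ν : Measure (EuclideanSpace ℝ (Fin d))) [IsProbabilityMeasure ν]
    (hνsupp : ∀ᵐ u ∂ν, ∀ i, u i ∈ Set.Icc (0 : ℝ) 1)
    (α β a b : ℝ) (hα : 0 ≤ α) (hβ : 0 ≤ β) (ha : a ≤ 0) (hb : 0 ≤ b)
    (s2 : ℝ) (hs2 : s2 = α ^ 2 + σ ^ 2 * β ^ 2) (hs2pos : 0 < s2)
    (w : EuclideanSpace ℝ (Fin d) → EuclideanSpace ℝ (Fin d) → ℝ)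
    (hw : ∀ x u, w x u = Real.exp (-‖x - β • u‖ ^ 2 / (2 * s2)))
    (ubar : EuclideanSpace ℝ (Fin d) → EuclideanSpace ℝ (Fin d))
    (hubar : ∀ x, ubar x = (∫ u, w x u ∂ν)⁻¹ • ∫ u, w x u • u ∂ν)
    (c₁ c₂ : ℝ) (hc₁ : c₁ = α * (α * b - a * β) / s2)
    (hc₂ : c₂ = (α * a + σ ^ 2 * β * b) / s2)
    (v : EuclideanSpace ℝ (Fin d) → EuclideanSpace ℝ (Fin d))
    (hv : ∀ x, v x = c₁ • ubar x + c₂ • x) :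
    Differentiable ℝ v ∧
      ∀ x y : EuclideanSpace ℝ (Fin d),
        c₂ * ‖y‖ ^ 2 ≤ ⟪y, fderiv ℝ v x y⟫ ∧
        ⟪y, fderiv ℝ v x y⟫ ≤ (c₂ + d * α * β * (α * b - a * β) / s2 ^ 2) * ‖y‖ ^ 2 := by
  classical
  set K : ℝ := Real.sqrt (2 * s2) with hK
  set W : EuclideanSpace ℝ (Fin d) → ℝ := fun x => ∫ u, w x u ∂ν with hWdef
  set M : EuclideanSpace ℝ (Fin d) → EuclideanSpace ℝ (Fin d) :=
    fun x => ∫ u, w x u • u ∂ν with hMdef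
  set dw : EuclideanSpace ℝ (Fin d) → EuclideanSpace ℝ (Fin d) →
      (EuclideanSpace ℝ (Fin d) →L[ℝ] ℝ) :=
    fun x u => (-s2⁻¹ * w x u) • innerSL ℝ (x - β • u) with hdwdef
  -- basic facts about w
  have hwpos : ∀ x u, 0 < w x u := fun x u => by rw [hw]; exact Real.exp_pos _
  have hwle1 : ∀ x u, w x u ≤ 1 := fun x u => by
    rw [hw, Real.exp_le_one_iff, neg_div]
    have : 0 ≤ ‖x - β • u‖ ^ 2 / (2 * s2) := by positivity
    linarith
  have hwfun : ∀ x, (fun u => w x u)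
      = fun u => Real.exp (-‖x - β • u‖ ^ 2 / (2 * s2)) := fun x => funext fun u => hw x u
  have hwcont : ∀ x, Continuous (w x) := by
    intro x
    rw [show w x = fun u => Real.exp (-‖x - β • u‖ ^ 2 / (2 * s2)) from hwfun x]
    fun_prop
  have hdwA : ∀ x u, HasFDerivAt (fun x' => w x' u) (dw x u) x := by
    intro x u
    have : (fun x' => w x' u) = fun x' => Real.exp (-‖x' - β • u‖ ^ 2 / (2 * s2)) :=
      funext fun x' => hw x' u
    rw [this]
    simpa only [hdwdef, hw] using aux_hasFDerivAt_w s2 hs2pos (β • u) x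
  have hdwn : ∀ x u, ‖dw x u‖ ≤ s2⁻¹ * K := by
    intro x u
    simpa only [hdwdef, hw, hK] using aux_norm_dw s2 hs2pos (β • u) x
  have hdwc : ∀ x, Continuous (dw x) := by
    intro x
    rw [hdwdef]
    refine Continuous.smul (f := fun u => -s2⁻¹ * w x u) (g := fun u => innerSL ℝ (x - β • u)) ?_ ?_
    · exact (continuous_const.mul (hwcont x))
    · exact (innerSL ℝ).continuous.comp (continuous_const.sub (continuous_const_smul β))
  -- a.e. bounds from the support hypothesis
  have hnu2 : ∀ᵐ u ∂ν, ‖u‖ ^ 2 ≤ (d : ℝ) := by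
    filter_upwards [hνsupp] with u hu
    rw [EuclideanSpace.norm_eq, Real.sq_sqrt (by positivity)]
    calc (∑ i, ‖u i‖ ^ 2) ≤ ∑ _i : Fin d, (1 : ℝ) := by
          apply Finset.sum_le_sum
          intro i _
          have h1 := (hu i).1
          have h2 := (hu i).2
          rw [Real.norm_eq_abs, sq_abs]
          nlinarith
      _ = d := by simp
  have hnu : ∀ᵐ u ∂ν, ‖u‖ ≤ Real.sqrt d := by
    filter_upwards [hnu2] with u hu
    have := Real.sqrt_le_sqrt hu
    rwa [Real.sqrt_sq (norm_nonneg _)] at this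
  set DW : EuclideanSpace ℝ (Fin d) → (EuclideanSpace ℝ (Fin d) →L[ℝ] ℝ) :=
    fun x => ∫ u, dw x u ∂ν with hDWdef
  set DM : EuclideanSpace ℝ (Fin d) →
      (EuclideanSpace ℝ (Fin d) →L[ℝ] EuclideanSpace ℝ (Fin d)) :=
    fun x => ∫ u, (dw x u).smulRight u ∂ν with hDMdef
  -- integrability
  have hIw : ∀ x, Integrable (w x) ν :=
    fun x => (integrable_const (1 : ℝ)).mono' (hwcont x).aestronglyMeasurable
      (ae_of_all _ fun u => by
        rw [Real.norm_eq_abs, abs_of_pos (hwpos x u)]; exact hwle1 x u)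
  have hIdw : ∀ x, Integrable (dw x) ν :=
    fun x => (integrable_const (s2⁻¹ * K)).mono' (hdwc x).aestronglyMeasurable
      (ae_of_all _ fun u => hdwn x u)
  have hIwu : ∀ x, Integrable (fun u => w x u • u) ν := by
    intro x
    refine (integrable_const (Real.sqrt d)).mono'
      (((hwcont x).smul continuous_id).aestronglyMeasurable) ?_
    filter_upwards [hnu] with u hu
    rw [norm_smul, Real.norm_eq_abs, abs_of_pos (hwpos x u)]
    calc w x u * ‖u‖ ≤ 1 * ‖u‖ :=
          mul_le_mul_of_nonneg_right (hwle1 x u) (norm_nonneg u)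
      _ ≤ Real.sqrt d := by simpa using hu
  have hGc : ∀ x, Continuous (fun u => (dw x u).smulRight u) := by
    intro x
    exact (isBoundedBilinearMap_smulRight : IsBoundedBilinearMap ℝ _).continuous.comp
      ((hdwc x).prodMk continuous_id)
  have hIG : ∀ x, Integrable (fun u => (dw x u).smulRight u) ν := by
    intro x
    refine (integrable_const (s2⁻¹ * K * Real.sqrt d)).mono'
      (hGc x).aestronglyMeasurable ?_
    filter_upwards [hnu] with u hu
    rw [ContinuousLinearMap.norm_smulRight_apply]
    exact mul_le_mul (hdwn x u) hu (norm_nonneg _) (le_trans (norm_nonneg _) (hdwn x u))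
  -- derivatives of W and M
  have hWd : ∀ x, HasFDerivAt W (DW x) x := by
    intro x
    exact hasFDerivAt_integral_of_dominated_of_fderiv_le (F' := fun x' u => dw x' u)
      (bound := fun _ => s2⁻¹ * K) (Metric.ball_mem_nhds x one_pos)
      (Filter.Eventually.of_forall fun x' => (hwcont x').aestronglyMeasurable)
      (hIw x) (hdwc x).aestronglyMeasurable
      (ae_of_all _ fun u x' _ => hdwn x' u) (integrable_const _)
      (ae_of_all _ fun u x' _ => hdwA x' u)
  have hMd : ∀ x, HasFDerivAt M (DM x) x := by
    intro x
    refine hasFDerivAt_integral_of_dominated_of_fderiv_le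
      (F' := fun x' u => (dw x' u).smulRight u)
      (bound := fun _ => s2⁻¹ * K * Real.sqrt d) (Metric.ball_mem_nhds x one_pos)
      (Filter.Eventually.of_forall fun x' =>
        ((hwcont x').smul continuous_id).aestronglyMeasurable)
      (hIwu x) (hGc x).aestronglyMeasurable
      ?_ (integrable_const _)
      (ae_of_all _ fun u x' _ => (hdwA x' u).smul_const u)
    filter_upwards [hnu] with u hu x' _
    rw [ContinuousLinearMap.norm_smulRight_apply]
    exact mul_le_mul (hdwn x' u) hu (norm_nonneg _) (le_trans (norm_nonneg _) (hdwn x' u))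
  have hWpos : ∀ x, 0 < W x := by
    intro x
    rw [integral_pos_iff_support_of_nonneg (fun u => (hwpos x u).le) (hIw x)]
    have hsupp : Function.support (w x) = Set.univ := by
      ext u; simp [Function.mem_support, (hwpos x u).ne']
    rw [hsupp]
    simp
  have hinv : ∀ x, HasFDerivAt (fun x' => (W x')⁻¹) ((-(W x ^ 2)⁻¹) • DW x) x := by
    intro x
    exact (hasDerivAt_inv (hWpos x).ne').comp_hasFDerivAt x (hWd x)
  have hubard : ∀ x, HasFDerivAt (fun x' => (W x')⁻¹ • M x')
      ((W x)⁻¹ • DM x + ((-(W x ^ 2)⁻¹) • DW x).smulRight (M x)) x :=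
    fun x => (hinv x).smul (hMd x)
  have hvEq : v = fun x => c₁ • ((W x)⁻¹ • M x) + c₂ • x := by
    funext x; rw [hv, hubar]
  have hvd : ∀ x, HasFDerivAt v
      (c₁ • ((W x)⁻¹ • DM x + ((-(W x ^ 2)⁻¹) • DW x).smulRight (M x)) +
        c₂ • ContinuousLinearMap.id ℝ (EuclideanSpace ℝ (Fin d))) x := by
    intro x
    rw [hvEq]
    exact ((hubard x).const_smul c₁).add ((hasFDerivAt_id x).const_smul c₂)
  refine ⟨fun x => (hvd x).differentiableAt, fun x y => ?_⟩
  -- pointwise computation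
  have hfd := (hvd x).fderiv
  have happ : fderiv ℝ v x y
      = c₁ • ((W x)⁻¹ • (DM x y) + (-(W x ^ 2)⁻¹ * (DW x y)) • M x) + c₂ • y := by
    rw [hfd]
    simp only [ContinuousLinearMap.add_apply, ContinuousLinearMap.coe_smul', Pi.smul_apply,
      ContinuousLinearMap.smulRight_apply, ContinuousLinearMap.coe_id', id_eq,
      ContinuousLinearMap.smul_apply, smul_smul, smul_eq_mul]
  -- integrability of scalar integrands
  have hcont_yu : Continuous fun u : EuclideanSpace ℝ (Fin d) => ⟪y, u⟫ :=
    continuous_const.inner continuous_id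
  have hfB : Integrable (fun u => w x u * ⟪y, u⟫) ν := by
    refine (integrable_const (‖y‖ * Real.sqrt d)).mono'
      ((hwcont x).mul hcont_yu).aestronglyMeasurable ?_
    filter_upwards [hnu] with u hu
    rw [Real.norm_eq_abs, abs_mul, abs_of_pos (hwpos x u)]
    calc w x u * |⟪y, u⟫| ≤ 1 * |⟪y, u⟫| :=
          mul_le_mul_of_nonneg_right (hwle1 x u) (abs_nonneg _)
      _ = |⟪y, u⟫| := one_mul _
      _ ≤ ‖y‖ * ‖u‖ := abs_real_inner_le_norm y u
      _ ≤ ‖y‖ * Real.sqrt d := mul_le_mul_of_nonneg_left hu (norm_nonneg y)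
  have hfC : Integrable (fun u => w x u * ⟪y, u⟫ ^ 2) ν := by
    refine (integrable_const (‖y‖ ^ 2 * (d : ℝ))).mono'
      ((hwcont x).mul (hcont_yu.pow 2)).aestronglyMeasurable ?_
    filter_upwards [hnu2] with u hu
    rw [Real.norm_eq_abs, abs_mul, abs_of_pos (hwpos x u), abs_of_nonneg (sq_nonneg _)]
    have h1 : ⟪y, u⟫ ^ 2 ≤ ‖y‖ ^ 2 * ‖u‖ ^ 2 := by
      rw [← sq_abs ⟪y, u⟫, ← mul_pow]
      exact pow_le_pow_left₀ (abs_nonneg _) (abs_real_inner_le_norm y u) 2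
    have h2 : ⟪y, u⟫ ^ 2 ≤ ‖y‖ ^ 2 * (d : ℝ) :=
      h1.trans (mul_le_mul_of_nonneg_left hu (sq_nonneg _))
    calc w x u * ⟪y, u⟫ ^ 2 ≤ 1 * ⟪y, u⟫ ^ 2 :=
          mul_le_mul_of_nonneg_right (hwle1 x u) (sq_nonneg _)
      _ = ⟪y, u⟫ ^ 2 := one_mul _
      _ ≤ ‖y‖ ^ 2 * (d : ℝ) := h2
  have hcont_dwy : Continuous fun u => dw x u y :=
    ((ContinuousLinearMap.apply ℝ ℝ y).continuous).comp (hdwc x)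
  have hIdwyu : Integrable (fun u => dw x u y • u) ν := by
    refine (integrable_const (s2⁻¹ * K * ‖y‖ * Real.sqrt d)).mono'
      (hcont_dwy.smul continuous_id).aestronglyMeasurable ?_
    filter_upwards [hnu] with u hu
    rw [norm_smul]
    have h1 : ‖dw x u y‖ ≤ s2⁻¹ * K * ‖y‖ := by
      calc ‖dw x u y‖ ≤ ‖dw x u‖ * ‖y‖ := (dw x u).le_opNorm y
        _ ≤ s2⁻¹ * K * ‖y‖ := mul_le_mul_of_nonneg_right (hdwn x u) (norm_nonneg y)
    exact mul_le_mul h1 hu (norm_nonneg u) (by positivity)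
  -- integral identities
  have hDWy : DW x y = ∫ u, dw x u y ∂ν := ContinuousLinearMap.integral_apply (hIdw x) y
  have hDMy : DM x y = ∫ u, dw x u y • u ∂ν := by
    have h0 : DM x y = ∫ u, ((dw x u).smulRight u) y ∂ν := ContinuousLinearMap.integral_apply (hIG x) y
    simpa only [ContinuousLinearMap.smulRight_apply] using h0
  have hyDM : ⟪y, DM x y⟫ = ∫ u, dw x u y * ⟪y, u⟫ ∂ν := by
    rw [hDMy, ← integral_inner hIdwyu y]
    exact integral_congr_ae (ae_of_all _ fun u => real_inner_smul_right y u (dw x u y))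
  have hyM : ⟪y, M x⟫ = ∫ u, w x u * ⟪y, u⟫ ∂ν := by
    have h0 : M x = ∫ u, w x u • u ∂ν := rfl
    rw [h0, ← integral_inner (hIwu x) y]
    exact integral_congr_ae (ae_of_all _ fun u => real_inner_smul_right y u (w x u))
  have hdwyval : ∀ u, dw x u y
      = -(s2⁻¹ * ⟪x, y⟫) * w x u + (s2⁻¹ * β) * (w x u * ⟪y, u⟫) := by
    intro u
    simp only [hdwdef, ContinuousLinearMap.smul_apply, innerSL_apply_apply, smul_eq_mul]
    rw [inner_sub_left, real_inner_smul_left, real_inner_comm u y]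
    ring
  set A := W x with hAdef
  set B := ∫ u, w x u * ⟪y, u⟫ ∂ν with hBdef
  set C := ∫ u, w x u * ⟪y, u⟫ ^ 2 ∂ν with hCdef
  have hAint : ∫ u, w x u ∂ν = A := rfl
  have hApos : 0 < A := hWpos x
  clear_value A B C
  have hInt1 : ∫ u, dw x u y ∂ν = -(s2⁻¹ * ⟪x, y⟫) * A + s2⁻¹ * β * B := by
    calc ∫ u, dw x u y ∂ν
        = ∫ u, (-(s2⁻¹ * ⟪x, y⟫) * w x u + (s2⁻¹ * β) * (w x u * ⟪y, u⟫)) ∂ν :=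
          integral_congr_ae (ae_of_all _ hdwyval)
      _ = -(s2⁻¹ * ⟪x, y⟫) * A + s2⁻¹ * β * B := by
          rw [integral_add ((hIw x).const_mul _) (hfB.const_mul _),
            integral_const_mul, integral_const_mul, hAint, ← hBdef]
  have hInt2 : ∫ u, dw x u y * ⟪y, u⟫ ∂ν = -(s2⁻¹ * ⟪x, y⟫) * B + s2⁻¹ * β * C := by
    calc ∫ u, dw x u y * ⟪y, u⟫ ∂ν
        = ∫ u, (-(s2⁻¹ * ⟪x, y⟫) * (w x u * ⟪y, u⟫)
            + (s2⁻¹ * β) * (w x u * ⟪y, u⟫ ^ 2)) ∂ν := by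
          refine integral_congr_ae (ae_of_all _ fun u => ?_)
          simp only [hdwyval u]; ring
      _ = -(s2⁻¹ * ⟪x, y⟫) * B + s2⁻¹ * β * C := by
          rw [integral_add (hfB.const_mul _) (hfC.const_mul _),
            integral_const_mul, integral_const_mul, ← hBdef, ← hCdef]
  have hval2 : ⟪y, fderiv ℝ v x y⟫
      = c₁ * (s2⁻¹ * β) * ((A ^ 2)⁻¹ * (A * C - B ^ 2)) + c₂ * ‖y‖ ^ 2 := by
    rw [happ, inner_add_right, real_inner_smul_right, real_inner_smul_right,
      inner_add_right, real_inner_smul_right, real_inner_smul_right,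
      real_inner_self_eq_norm_sq, hyDM, hInt2, hDWy, hInt1, hyM]
    have hA0 : A ≠ 0 := ne_of_gt hApos
    field_simp
    ring
  -- Cauchy-Schwarz lower bound
  have hkey : B ^ 2 ≤ A * C := by
    have h0 : 0 ≤ ∫ u, w x u * (⟪y, u⟫ - B / A) ^ 2 ∂ν :=
      integral_nonneg fun u => mul_nonneg (hwpos x u).le (sq_nonneg _)
    have hi1 : Integrable (fun u => -(2 * (B / A)) * (w x u * ⟪y, u⟫)) ν :=
      hfB.const_mul _
    have hi2 : Integrable (fun u => (B / A) ^ 2 * w x u) ν := (hIw x).const_mul _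
    have hi3 : Integrable (fun u => -(2 * (B / A)) * (w x u * ⟪y, u⟫)
        + (B / A) ^ 2 * w x u) ν := hi1.add hi2
    have hexp : ∫ u, w x u * (⟪y, u⟫ - B / A) ^ 2 ∂ν
        = C - 2 * (B / A) * B + (B / A) ^ 2 * A := by
      calc ∫ u, w x u * (⟪y, u⟫ - B / A) ^ 2 ∂ν
          = ∫ u, (w x u * ⟪y, u⟫ ^ 2 + (-(2 * (B / A)) * (w x u * ⟪y, u⟫)
              + (B / A) ^ 2 * w x u)) ∂ν := by
            refine integral_congr_ae (ae_of_all _ fun u => ?_); simp only; ring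
        _ = C - 2 * (B / A) * B + (B / A) ^ 2 * A := by
            rw [integral_add hfC hi3, integral_add hi1 hi2,
              integral_const_mul, integral_const_mul, hAint, ← hBdef, ← hCdef]
            ring
    rw [hexp] at h0
    have hA0 : A ≠ 0 := ne_of_gt hApos
    have h1 : 0 ≤ C - B ^ 2 / A := by
      have : 2 * (B / A) * B - (B / A) ^ 2 * A = B ^ 2 / A := by field_simp; ring
      linarith
    have h2 : B ^ 2 / A ≤ C := by linarith
    calc B ^ 2 = B ^ 2 / A * A := by field_simp
      _ ≤ C * A := mul_le_mul_of_nonneg_right h2 hApos.le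
      _ = A * C := mul_comm _ _
  -- upper bound on C
  have hCd : C ≤ (d : ℝ) * ‖y‖ ^ 2 * A := by
    have hmono : ∫ u, w x u * ⟪y, u⟫ ^ 2 ∂ν ≤ ∫ u, ((d : ℝ) * ‖y‖ ^ 2) * w x u ∂ν := by
      apply integral_mono_ae hfC ((hIw x).const_mul _)
      filter_upwards [hnu2] with u hu
      have h1 : ⟪y, u⟫ ^ 2 ≤ ‖y‖ ^ 2 * ‖u‖ ^ 2 := by
        rw [← sq_abs ⟪y, u⟫, ← mul_pow]
        exact pow_le_pow_left₀ (abs_nonneg _) (abs_real_inner_le_norm y u) 2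
      have hw0 := (hwpos x u).le
      have h2 : ⟪y, u⟫ ^ 2 ≤ (d : ℝ) * ‖y‖ ^ 2 := by
        refine h1.trans ?_
        rw [mul_comm ((d : ℝ)) (‖y‖ ^ 2)]
        exact mul_le_mul_of_nonneg_left hu (sq_nonneg _)
      calc w x u * ⟪y, u⟫ ^ 2 ≤ w x u * ((d : ℝ) * ‖y‖ ^ 2) :=
            mul_le_mul_of_nonneg_left h2 hw0
        _ = (d : ℝ) * ‖y‖ ^ 2 * w x u := by ring
    rw [integral_const_mul, hAint] at hmono
    rw [hCdef]
    exact hmono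
  have hterm0 : 0 ≤ (A ^ 2)⁻¹ * (A * C - B ^ 2) := by
    have h1 : 0 ≤ A * C - B ^ 2 := by linarith
    exact mul_nonneg (inv_nonneg.2 (sq_nonneg A)) h1
  have hterm1 : (A ^ 2)⁻¹ * (A * C - B ^ 2) ≤ (d : ℝ) * ‖y‖ ^ 2 := by
    have h2 : A * C - B ^ 2 ≤ (d : ℝ) * ‖y‖ ^ 2 * A ^ 2 := by
      have h2a : A * C ≤ A * ((d : ℝ) * ‖y‖ ^ 2 * A) := mul_le_mul_of_nonneg_left hCd hApos.le
      have h2b : A * ((d : ℝ) * ‖y‖ ^ 2 * A) = (d : ℝ) * ‖y‖ ^ 2 * A ^ 2 := by ring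
      have h2c : 0 ≤ B ^ 2 := sq_nonneg B
      linarith
    have hA2 : (A : ℝ) ^ 2 ≠ 0 := pow_ne_zero _ (ne_of_gt hApos)
    calc (A ^ 2)⁻¹ * (A * C - B ^ 2) ≤ (A ^ 2)⁻¹ * ((d : ℝ) * ‖y‖ ^ 2 * A ^ 2) :=
          mul_le_mul_of_nonneg_left h2 (inv_nonneg.2 (sq_nonneg A))
      _ = (d : ℝ) * ‖y‖ ^ 2 := by field_simp
  have hαβ : 0 ≤ α * b - a * β := by
    have h1 : 0 ≤ α * b := mul_nonneg hα hb
    have h2 : a * β ≤ 0 := mul_nonpos_of_nonpos_of_nonneg ha hβ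
    linarith
  have hc₁0 : 0 ≤ c₁ := by
    rw [hc₁]; exact div_nonneg (mul_nonneg hα hαβ) hs2pos.le
  have hco : 0 ≤ c₁ * (s2⁻¹ * β) := mul_nonneg hc₁0 (by positivity)
  constructor
  · rw [hval2]
    linarith [mul_nonneg hco hterm0]
  · rw [hval2]
    have h3 : c₁ * (s2⁻¹ * β) * ((A ^ 2)⁻¹ * (A * C - B ^ 2))
        ≤ c₁ * (s2⁻¹ * β) * ((d : ℝ) * ‖y‖ ^ 2) := mul_le_mul_of_nonneg_left hterm1 hco
    have h4 : c₁ * (s2⁻¹ * β) * ((d : ℝ) * ‖y‖ ^ 2)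
        = (d : ℝ) * α * β * (α * b - a * β) / s2 ^ 2 * ‖y‖ ^ 2 := by
      rw [hc₁]; field_simp
    have h5 : (c₂ + (d : ℝ) * α * β * (α * b - a * β) / s2 ^ 2) * ‖y‖ ^ 2
        = c₂ * ‖y‖ ^ 2 + (d : ℝ) * α * β * (α * b - a * β) / s2 ^ 2 * ‖y‖ ^ 2 := by ring
    rw [h5]
    linarith
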